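/- For every N ≥ 1, Zpi(N) ≤ ZQ(N); that is, there is an injection from the set of valid p-i configurations on the N×N grid into the set of valid Q-charge configurations on the N×N grid (obtained by restricting the Q-charge states on the bonds crossed by a fixed diagonal line to lie in {0, 2}, which determines the lift of each p-i bond state to a Q-charge bond state). -/
import Mathlib

/-- The `p`-`i` constraint on bond states (`true` = state `i`, `false` = state
`p`): around every vertex, either all four incident bond states are `p`, or
exactly two of them are `i`, one horizontal and one vertical. -/
def PiValid (N : ℕ) (h : Fin N × Fin (N + 1) → Bool)
    (v : Fin (N + 1) × Fin N → Bool) : Prop :=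
  ∀ i j : Fin N,
    (h (i, j.castSucc) = false ∧ h (i, j.succ) = false ∧
      v (i.castSucc, j) = false ∧ v (i.succ, j) = false) ∨
    (h (i, j.castSucc) ≠ h (i, j.succ) ∧ v (i.castSucc, j) ≠ v (i.succ, j))

/-- The number of `p`-`i` configurations on the `N × N` grid. -/
noncomputable def Zpi (N : ℕ) : ℕ :=
  Nat.card {p : (Fin N × Fin (N + 1) → Bool) × (Fin (N + 1) × Fin N → Bool) //
    PiValid N p.1 p.2}

/-- The `Q`-charge constraint on bond states: around every vertex, the south
and east bond states differ from the north and west bond states (respectively)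
by a common `s ∈ {+1, -1}`. -/
def QValid (N : ℕ) (h : Fin N × Fin (N + 1) → Fin 4)
    (v : Fin (N + 1) × Fin N → Fin 4) : Prop :=
  ∀ i j : Fin N, ∃ s : ℤ, (s = 1 ∨ s = -1) ∧
    ((h (i, j.succ) : ℤ) - ((h (i, j.castSucc)) : ℤ) = s) ∧
    ((v (i.succ, j) : ℤ) - ((v (i.castSucc, j)) : ℤ) = s)

/-- The number of `Q`-charge configurations on the `N × N` grid. -/
noncomputable def ZQ (N : ℕ) : ℕ :=
  Nat.card {p : (Fin N × Fin (N + 1) → Fin 4) × (Fin (N + 1) × Fin N → Fin 4) //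
    QValid N p.1 p.2}

/-- Parity-dependent lift of a `p`-`i` bond state to a `Q`-charge value. -/
def bondVal (n : ℕ) (b : Bool) : Fin 4 :=
  if n % 2 = 0 then (if b then 3 else 1) else (if b then 0 else 2)

lemma bondVal_cast (n : ℕ) (b : Bool) :
    ((bondVal n b : Fin 4) : ℤ) =
      if n % 2 = 0 then (if b then 3 else 1) else (if b then 0 else 2) := by
  unfold bondVal
  rcases Nat.mod_two_eq_zero_or_one n with h | h <;> cases b <;> simp [h] <;> decide

lemma bondVal_inj (n : ℕ) {b b' : Bool} (h : bondVal n b = bondVal n b') : b = b' := by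
  unfold bondVal at h
  rcases Nat.mod_two_eq_zero_or_one n with hn | hn <;> cases b <;> cases b' <;>
    simp [hn] at h ⊢ <;> revert h <;> decide

/-- For every `N ≥ 1`, `Zpi(N) ≤ ZQ(N)`: the valid `p`-`i` configurations on
the `N × N` grid inject into the valid `Q`-charge configurations. -/
theorem pi_le_Qcharge (N : ℕ) (hN : 1 ≤ N) : Zpi N ≤ ZQ N := by
  classical
  apply Nat.card_le_card_of_injective
    (f := fun p : {p : (Fin N × Fin (N + 1) → Bool) × (Fin (N + 1) × Fin N → Bool) //
        PiValid N p.1 p.2} =>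
      (⟨(fun q => bondVal ((q.1 : ℕ) + (q.2 : ℕ)) (p.1.1 q),
         fun q => bondVal ((q.1 : ℕ) + (q.2 : ℕ)) (p.1.2 q)), by
        intro i j
        rcases p.2 i j with ⟨h1, h2, h3, h4⟩ | ⟨h1, h2⟩
        · refine ⟨if ((i : ℕ) + (j : ℕ)) % 2 = 0 then 1 else -1, ?_, ?_, ?_⟩
          · split <;> simp
          · simp only [h1, h2, Fin.coe_castSucc, Fin.val_succ, bondVal_cast]
            rcases Nat.mod_two_eq_zero_or_one ((i : ℕ) + (j : ℕ)) with hm | hm <;>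
              · have hm' : ((i : ℕ) + ((j : ℕ) + 1)) % 2 = 1 - ((i : ℕ) + (j : ℕ)) % 2 := by
                  omega
                rw [hm'] <;> simp [hm]
          · simp only [h3, h4, Fin.coe_castSucc, Fin.val_succ, bondVal_cast]
            rcases Nat.mod_two_eq_zero_or_one ((i : ℕ) + (j : ℕ)) with hm | hm <;>
              · have hm' : (((i : ℕ) + 1) + (j : ℕ)) % 2 = 1 - ((i : ℕ) + (j : ℕ)) % 2 := by
                  omega
                rw [hm'] <;> simp [hm]
        · refine ⟨if ((i : ℕ) + (j : ℕ)) % 2 = 0 then -1 else 1, ?_, ?_, ?_⟩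
          · split <;> simp
          · simp only [Fin.coe_castSucc, Fin.val_succ, bondVal_cast]
            rcases Nat.mod_two_eq_zero_or_one ((i : ℕ) + (j : ℕ)) with hm | hm <;>
              · have hm' : ((i : ℕ) + ((j : ℕ) + 1)) % 2 = 1 - ((i : ℕ) + (j : ℕ)) % 2 := by
                  omega
                rw [hm']
                revert h1
                cases hb : p.1.1 (i, j.castSucc) <;> cases hb' : p.1.1 (i, j.succ) <;>
                  simp [hm] <;> omega
          · simp only [Fin.coe_castSucc, Fin.val_succ, bondVal_cast]
            rcases Nat.mod_two_eq_zero_or_one ((i : ℕ) + (j : ℕ)) with hm | hm <;>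
              · have hm' : (((i : ℕ) + 1) + (j : ℕ)) % 2 = 1 - ((i : ℕ) + (j : ℕ)) % 2 := by
                  omega
                rw [hm']
                revert h2
                cases hb : p.1.2 (i.castSucc, j) <;> cases hb' : p.1.2 (i.succ, j) <;>
                  simp [hm] <;> omega⟩ :
        {p : (Fin N × Fin (N + 1) → Fin 4) × (Fin (N + 1) × Fin N → Fin 4) //
          QValid N p.1 p.2}))
  intro a b hab
  have hh := congrArg (fun x => x.val.1) hab
  have hv := congrArg (fun x => x.val.2) hab
  apply Subtype.ext
  refine Prod.ext ?_ ?_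
  · funext q
    exact bondVal_inj _ (congrFun hh q)
  · funext q
    exact bondVal_inj _ (congrFun hv q)
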